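/- Consider ground terms of combinatory logic over the single constant O with the Owl rule @(@(O,x),y) → @(y,@(x,y)) (O x y → y (x y)). Define a partial interpretation into A = {0,1} by [[O]] = 0, [[@]](0,0) = 1, [[@]](0,1) = 1, [[@]](1,0) = 1, and [[@]](1,1) undefined, extended to ground terms by partial evaluation. Then a ground term t is strongly normalizing with respect to the Owl rule if and only if [[t]] is defined. -/
import Mathlib


namespace Owl2

/-- Ground terms of combinatory logic over a set `C` of constants. -/
inductive CL (C : Type) : Type
  | const : C → CL C
  | app : CL C → CL C → CL C

/-- One-step rewriting with the Owl rule `O x y → y (x y)` (the only constant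
is `O`). -/
inductive ORw : CL Unit → CL Unit → Prop
  | root (x y : CL Unit) :
      ORw (.app (.app (.const ()) x) y) (.app y (.app x y))
  | appl {s t : CL Unit} (u : CL Unit) : ORw s t → ORw (.app s u) (.app t u)
  | appr (u : CL Unit) {s t : CL Unit} : ORw s t → ORw (.app u s) (.app u t)

/-- The partial interpretation of application on `A = {0,1}`:
`(0,0) ↦ 1`, `(0,1) ↦ 1`, `(1,0) ↦ 1`, `(1,1)` undefined. -/
def appI : Fin 2 → Fin 2 → Option (Fin 2) := fun a b =>
  if a = 0 then some 1 else if b = 0 then some 1 else none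

/-- Partial evaluation of ground terms: `[[O]] = 0` and
`[[@(t₁,t₂)]] ≃ appI [[t₁]] [[t₂]]`. -/
def evalO : CL Unit → Option (Fin 2)
  | .const _ => some 0
  | .app t u => (evalO t).bind fun a => (evalO u).bind fun b => appI a b

/-- Weight measure. -/
def w : CL Unit → ℕ
  | .const _ => 1
  | .app s t => 2 * w s + w t

lemma w_pos (t : CL Unit) : 0 < w t := by
  induction t with
  | const _ => simp [w]
  | app a b iha ihb => simp only [w]; omega

lemma appI_ne_zero (a b : Fin 2) : appI a b ≠ some 0 := by revert a b; decide

lemma eval_zero (t : CL Unit) (h : evalO t = some 0) : t = .const () := by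
  cases t with
  | const u => rfl
  | app a b =>
    exfalso
    simp only [evalO] at h
    cases ha : evalO a with
    | none => simp [ha] at h
    | some va =>
      cases hb : evalO b with
      | none => simp [ha, hb] at h
      | some vb =>
        simp only [ha, hb, Option.bind_some] at h
        exact appI_ne_zero va vb h

/-- One step from a defined term preserves the value and decreases weight. -/
lemma step_lemma : ∀ {s t : CL Unit}, ORw s t → (evalO s).isSome →
    evalO t = evalO s ∧ w t < w s := by
  intro s t h
  induction h with
  | root x y =>
    intro hs
    simp only [evalO] at hs ⊢
    cases hx : evalO x with
    | none => rw [hx] at hs; simp at hs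
    | some a =>
      rw [hx] at hs
      cases hy : evalO y with
      | none => rw [hy] at hs; simp at hs
      | some b =>
        rw [hy] at hs
        simp only [Option.bind_some] at hs
        have hb : b = 0 := by fin_cases a <;> fin_cases b <;> simp_all [appI]
        subst hb
        have hyO : y = .const () := eval_zero y hy
        subst hyO
        constructor
        · simp only [evalO, hx, Option.bind_some]
          fin_cases a <;> rfl
        · simp only [w]; omega
  | @appl s' t' u h ih =>
    intro hs
    simp only [evalO] at hs ⊢
    cases hsv : evalO s' with
    | none => simp [hsv] at hs
    | some a =>
      rw [hsv] at hs
      have := ih (by simp [hsv])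
      rw [this.1, hsv]
      refine ⟨rfl, ?_⟩
      simp only [w]; omega
  | @appr u s' t' h ih =>
    intro hs
    simp only [evalO] at hs ⊢
    cases huv : evalO u with
    | none => rw [huv] at hs; simp at hs
    | some a =>
      rw [huv] at hs
      cases hsv : evalO s' with
      | none => rw [hsv] at hs; simp at hs
      | some b =>
        rw [hsv] at hs
        have := ih (by simp [hsv])
        rw [this.1, hsv]
        refine ⟨rfl, ?_⟩
        simp only [w]; omega

/-- A defined term of value 1 (an application) is either headed by `O`, or it
admits a value-preserving rewrite step. -/
lemma defined_app_step : ∀ a : CL Unit, evalO a = some 1 →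
    (∃ x, a = CL.app (.const ()) x) ∨ ∃ a', ORw a a' ∧ evalO a' = some 1 := by
  intro a
  induction a with
  | const u => intro h; simp [evalO] at h
  | app a1 a2 ih1 ih2 =>
    intro h
    simp only [evalO] at h
    cases h1 : evalO a1 with
    | none => simp [h1] at h
    | some v1 =>
      cases h2 : evalO a2 with
      | none => simp [h1, h2] at h
      | some v2 =>
        simp only [h1, h2, Option.bind_some] at h
        by_cases hv1 : v1 = 0
        · subst hv1
          left
          exact ⟨a2, by rw [eval_zero a1 h1]⟩
        · have hv1' : v1 = 1 := by omega
          subst hv1'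
          have hv2 : v2 = 0 := by fin_cases v2 <;> simp_all [appI]
          subst hv2
          have h2O : a2 = .const () := eval_zero a2 h2
          subst h2O
          rcases ih1 h1 with ⟨x, rfl⟩ | ⟨a1', hstep, he⟩
          · right
            refine ⟨.app (.const ()) (.app x (.const ())), ORw.root x (.const ()), ?_⟩
            simp only [evalO, Option.bind_some] at h1 ⊢
            cases hx : evalO x with
            | none => simp [hx] at h1
            | some vx =>
              simp only [hx, Option.bind_some]
              fin_cases vx <;> rfl
          · right
            refine ⟨.app a1' (.const ()), ORw.appl _ hstep, ?_⟩
            simp [evalO, he, appI]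

/-- An undefined term has an undefined one-step reduct. -/
lemma none_step : ∀ t : CL Unit, evalO t = none →
    ∃ t', ORw t t' ∧ evalO t' = none := by
  intro t
  induction t with
  | const u => intro h; simp [evalO] at h
  | app a b iha ihb =>
    intro h
    cases ha : evalO a with
    | none =>
      obtain ⟨a', hs, he⟩ := iha ha
      exact ⟨.app a' b, ORw.appl b hs, by simp [evalO, he]⟩
    | some va =>
      cases hb : evalO b with
      | none =>
        obtain ⟨b', hs, he⟩ := ihb hb
        exact ⟨.app a b', ORw.appr a hs, by simp [evalO, ha, he]⟩
      | some vb =>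
        simp only [evalO, ha, hb, Option.bind_some] at h
        have hva : va = 1 ∧ vb = 1 := by
          fin_cases va <;> fin_cases vb <;> simp_all [appI]
        obtain ⟨hva1, hvb1⟩ := hva
        subst hva1; subst hvb1
        rcases defined_app_step a ha with ⟨x, rfl⟩ | ⟨a', hstep, he⟩
        · refine ⟨.app b (.app x b), ORw.root x b, ?_⟩
          simp only [evalO, hb, Option.bind_some]
          simp only [evalO] at ha
          cases hx : evalO x with
          | none => simp [hx] at ha
          | some vx =>
            simp only [hx, Option.bind_some]
            fin_cases vx <;> rfl
        · exact ⟨.app a' b, ORw.appl b hstep, by simp [evalO, he, hb, appI]⟩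

/-- Chain of undefined terms. -/
noncomputable def chain (t : CL Unit) (h : evalO t = none) :
    ℕ → {s : CL Unit // evalO s = none}
  | 0 => ⟨t, h⟩
  | k + 1 =>
    ⟨(none_step (chain t h k).1 (chain t h k).2).choose,
     (none_step (chain t h k).1 (chain t h k).2).choose_spec.2⟩

lemma chain_step (t : CL Unit) (h : evalO t = none) (k : ℕ) :
    ORw (chain t h k).1 (chain t h (k + 1)).1 :=
  (none_step (chain t h k).1 (chain t h k).2).choose_spec.1

/-- A ground `O`-term is strongly normalizing with respect
to the Owl rule iff its interpretation is defined. -/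
theorem owl_SN_iff_defined :
    ∀ t : CL Unit,
      (¬ ∃ f : ℕ → CL Unit, f 0 = t ∧ ∀ k : ℕ, ORw (f k) (f (k + 1))) ↔
        (evalO t).isSome := by
  intro t
  constructor
  · -- SN → defined, by contraposition
    intro hsn
    by_contra hnone
    rw [Option.not_isSome_iff_eq_none] at hnone
    exact hsn ⟨fun k => (chain t hnone k).1, rfl, chain_step t hnone⟩
  · -- defined → SN
    intro hdef ⟨f, hf0, hstep⟩
    have key : ∀ k, (evalO (f k)).isSome ∧ w (f (k + 1)) < w (f k) := by
      intro k
      induction k with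
      | zero =>
        rw [hf0]
        exact ⟨hdef, (step_lemma (hf0 ▸ hstep 0) hdef).2⟩
      | succ n ih =>
        have h1 : (evalO (f (n + 1))).isSome := by
          rw [(step_lemma (hstep n) ih.1).1]; exact ih.1
        exact ⟨h1, (step_lemma (hstep (n + 1)) h1).2⟩
    have mono : ∀ k, w (f k) + k ≤ w (f 0) := by
      intro k
      induction k with
      | zero => omega
      | succ n ih => have := (key n).2; omega
    have := mono (w (f 0) + 1)
    have := w_pos (f (w (f 0) + 1))
    omega

end Owl2
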